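/- Let u : ℝ² → ℝ be a positive C² function satisfying Δu ≥ κ u for some κ > 0. Then for any closed ball B = B̄(y₀, r) ⊂ ℝ², max_{y∈B} u(y) ≥ (1 + κ r²/4) · min_{y∈B} u(y). -/

import Mathlib

noncomputable section

/-- The Laplacian of a function on the Euclidean plane, as the sum of second
directional derivatives along the two coordinate axes. -/
def lap2 (u : EuclideanSpace ℝ (Fin 2) → ℝ) (y : EuclideanSpace ℝ (Fin 2)) : ℝ :=
  iteratedDeriv 2 (fun t : ℝ => u (y + t • EuclideanSpace.single (0 : Fin 2) (1 : ℝ))) 0 +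
  iteratedDeriv 2 (fun t : ℝ => u (y + t • EuclideanSpace.single (1 : Fin 2) (1 : ℝ))) 0

theorem aux_second_deriv_nonpos (f : ℝ → ℝ) (hf : ContDiff ℝ 2 f)
    (hmax : IsLocalMax f 0) : deriv (deriv f) 0 ≤ 0 := by
  by_contra hc
  push_neg at hc
  have hsplit := (contDiff_succ_iff_deriv (n := 1)).mp (by exact_mod_cast hf)
  have hf' : ContDiff ℝ 1 (deriv f) := hsplit.2.2
  have hdf : Differentiable ℝ f := hsplit.1
  have h0 : deriv f 0 = 0 := hmax.deriv_eq_zero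
  have hd : HasDerivAt (deriv f) (deriv (deriv f) 0) 0 :=
    ((hf'.differentiable one_ne_zero) 0).hasDerivAt
  have hslope : Filter.Tendsto (slope (deriv f) 0) (nhdsWithin 0 {(0:ℝ)}ᶜ)
      (nhds (deriv (deriv f) 0)) := hasDerivAt_iff_tendsto_slope.mp hd
  have hpos : ∀ᶠ t in nhdsWithin 0 {(0:ℝ)}ᶜ, 0 < slope (deriv f) 0 t :=
    hslope.eventually (eventually_gt_nhds hc)
  have hpos' : ∀ᶠ t in nhdsWithin 0 (Set.Ioi 0), 0 < deriv f t := by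
    have := hpos.filter_mono (nhdsWithin_mono 0 (by intro x hx; exact ne_of_gt hx))
    filter_upwards [this, self_mem_nhdsWithin] with t ht ht'
    have hs : slope (deriv f) 0 t = deriv f t / t := by
      simp [slope_def_field, h0]
    rw [hs] at ht
    have htpos : (0:ℝ) < t := ht'
    rcases div_pos_iff.mp ht with h|h
    · exact h.1
    · linarith [h.2]
  -- extract δ
  rw [eventually_nhdsWithin_iff] at hpos'
  obtain ⟨δ, hδpos, hδ0⟩ := Metric.eventually_nhds_iff.mp hpos'
  have hδ : ∀ x, dist x 0 < δ → x ∈ Set.Ioi (0:ℝ) → 0 < deriv f x := fun x h1 h2 => hδ0 h1 h2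
  -- f is strictly monotone on [0, δ/2]... use strictMonoOn_of_deriv_pos on Icc 0 δ'
  set δ' := δ/2 with hδ'
  have hδ'pos : 0 < δ' := by positivity
  have hmono : StrictMonoOn f (Set.Icc 0 δ') := by
    apply strictMonoOn_of_deriv_pos (convex_Icc 0 δ') (hdf.continuous.continuousOn)
    intro x hx
    rw [interior_Icc] at hx
    apply hδ
    · simp [Real.dist_eq, abs_of_pos hx.1]
      linarith [hx.2]
    · exact hx.1
  -- contradict local max
  obtain ⟨ε, hεpos, hε⟩ := Metric.eventually_nhds_iff.mp hmax
  set t := min δ' ε / 2 with htdef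
  have htpos : 0 < t := by positivity
  have ht1 : t ≤ δ' := by
    have := min_le_left δ' ε; simp [htdef]; linarith
  have h1 : f 0 < f t := hmono ⟨le_rfl, hδ'pos.le⟩ ⟨htpos.le, ht1⟩ htpos
  have h2 : f t ≤ f 0 := by
    apply hε
    have hlt : t < ε := by
      have h := min_le_right δ' ε
      calc t = (δ' ⊓ ε) / 2 := htdef
        _ < δ' ⊓ ε := by have := lt_min hδ'pos hεpos; linarith
        _ ≤ ε := h
    rw [Real.dist_eq, sub_zero, abs_of_pos htpos]
    exact hlt
  linarith

theorem aux_dir (u : EuclideanSpace ℝ (Fin 2) → ℝ) (A : ℝ)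
    (hsmooth : ContDiff ℝ 2 u) (p y₀ : EuclideanSpace ℝ (Fin 2))
    (hmax : IsLocalMax (fun y => u y - A * ‖y - y₀‖ ^ 2) p)
    (e : EuclideanSpace ℝ (Fin 2)) (he : ‖e‖ = 1) :
    iteratedDeriv 2 (fun t : ℝ => u (p + t • e)) 0 ≤ 2 * A := by
  set φ : ℝ → ℝ := fun t => u (p + t • e) with hφdef
  set b : ℝ := 2 * A * (inner ℝ (p - y₀) e : ℝ) with hbdef
  set c : ℝ := A * ‖p - y₀‖ ^ 2 with hcdef
  set g : ℝ → ℝ := fun t => φ t - (c + b * t + A * t ^ 2) with hgdef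
  have hline : ContDiff ℝ 2 (fun t : ℝ => p + t • e) :=
    contDiff_const.add (contDiff_id.smul contDiff_const)
  have hφ : ContDiff ℝ 2 φ := hsmooth.comp hline
  have hg_eq : ∀ t : ℝ, g t = (fun y => u y - A * ‖y - y₀‖ ^ 2) (p + t • e) := by
    intro t
    have h1 : p + t • e - y₀ = (p - y₀) + t • e := by abel
    simp only [hgdef, hφdef]
    rw [h1, norm_add_sq_real, real_inner_smul_right, norm_smul]
    simp [hbdef, hcdef, he, abs_of_nonneg, mul_pow, sq_abs]
    ring
  have hgmax : IsLocalMax g 0 := by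
    have htend : Filter.Tendsto (fun t : ℝ => p + t • e) (nhds 0) (nhds p) := by
      have : Continuous (fun t : ℝ => p + t • e) := by continuity
      have h := this.tendsto 0
      simpa using h
    have hev := htend.eventually hmax
    have hg0 : g 0 = (fun y => u y - A * ‖y - y₀‖ ^ 2) p := by
      rw [hg_eq 0]; simp
    unfold IsLocalMax IsMaxFilter
    filter_upwards [hev] with t ht
    rw [hg_eq t, hg0]
    exact ht
  have hgsmooth : ContDiff ℝ 2 g := by
    apply hφ.sub
    apply ContDiff.add
    apply ContDiff.add contDiff_const (contDiff_const.mul contDiff_id)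
    exact contDiff_const.mul (contDiff_id.pow 2)
  have hkey := aux_second_deriv_nonpos g hgsmooth hgmax
  -- compute deriv (deriv g) 0
  have hφsplit := (contDiff_succ_iff_deriv (n := 1)).mp (by exact_mod_cast hφ)
  have hφd : Differentiable ℝ φ := hφsplit.1
  have hφ' : ContDiff ℝ 1 (deriv φ) := hφsplit.2.2
  have hq : ∀ t : ℝ, deriv g t = deriv φ t - (b + A * (2 * t)) := by
    intro t
    have h1 : HasDerivAt (fun t : ℝ => b * t) b t := by
      simpa using (hasDerivAt_id t).const_mul b
    have h2 : HasDerivAt (fun t : ℝ => A * t ^ 2) (A * (2 * t)) t := by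
      have := (hasDerivAt_pow 2 t).const_mul A
      simpa [mul_comm] using this
    have hqd : HasDerivAt (fun t : ℝ => c + b * t + A * t ^ 2) (b + A * (2 * t)) t := by
      simpa using ((hasDerivAt_const t c).fun_add h1).fun_add h2
    rw [hgdef]
    rw [deriv_fun_sub (hφd t) hqd.differentiableAt, hqd.deriv]
  have h2 : deriv (deriv g) 0 = deriv (deriv φ) 0 - 2 * A := by
    have : deriv g = fun t => deriv φ t - (b + A * (2 * t)) := funext hq
    rw [this]
    have h4 : HasDerivAt (fun t : ℝ => b + A * (2 * t)) (2 * A) 0 := by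
      have := ((hasDerivAt_id (0:ℝ)).const_mul 2).const_mul A
      simpa [mul_comm, mul_assoc] using (hasDerivAt_const (0:ℝ) b).fun_add this
    rw [deriv_fun_sub ((hφ'.differentiable one_ne_zero) 0) h4.differentiableAt, h4.deriv]
  have h3 : iteratedDeriv 2 φ 0 = deriv (deriv φ) 0 := by
    simp [iteratedDeriv_succ, iteratedDeriv_zero]
  calc iteratedDeriv 2 (fun t : ℝ => u (p + t • e)) 0 = deriv (deriv φ) 0 := h3
    _ = deriv (deriv g) 0 + 2 * A := by rw [h2]; ring
    _ ≤ 0 + 2 * A := by linarith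
    _ = 2 * A := by ring

/-- Ahlfors-type lemma: if u > 0 is C² on ℝ² and Δu ≥ κu with κ > 0, then on any closed
ball B of radius r, max_B u ≥ (1 + κr²/4) min_B u. -/
theorem stmt4 (u : EuclideanSpace ℝ (Fin 2) → ℝ) (κ : ℝ) (hκ : 0 < κ)
    (hpos : ∀ y, 0 < u y) (hsmooth : ContDiff ℝ 2 u)
    (hlap : ∀ y, κ * u y ≤ lap2 u y)
    (y₀ : EuclideanSpace ℝ (Fin 2)) (r : ℝ) (hr : 0 ≤ r) :
    (1 + κ * r ^ 2 / 4) * sInf (u '' Metric.closedBall y₀ r)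
      ≤ sSup (u '' Metric.closedBall y₀ r) := by
  set B := Metric.closedBall y₀ r with hB
  have hBne : B.Nonempty := ⟨y₀, Metric.mem_closedBall_self hr⟩
  have hBc : IsCompact B := isCompact_closedBall _ _
  have hu : ContinuousOn u B := hsmooth.continuous.continuousOn
  obtain ⟨z, hzB, hz⟩ := hBc.exists_isMinOn hBne hu
  set m := sInf (u '' B) with hm
  set M := sSup (u '' B) with hM
  have hbddA : BddAbove (u '' B) := (hBc.image_of_continuousOn hu).bddAbove
  have hbddB : BddBelow (u '' B) := (hBc.image_of_continuousOn hu).bddBelow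
  have hmemM : ∀ y ∈ B, u y ≤ M := fun y hy => le_csSup hbddA ⟨y, hy, rfl⟩
  have hmemm : ∀ y ∈ B, m ≤ u y := fun y hy => csInf_le hbddB ⟨y, hy, rfl⟩
  have hm_eq : m = u z := by
    apply le_antisymm (csInf_le hbddB ⟨z, hzB, rfl⟩)
    apply le_csInf (hBne.image u)
    rintro _ ⟨y, hy, rfl⟩
    exact hz hy
  have hmpos : 0 < m := hm_eq ▸ hpos z
  have key : ∀ A : ℝ, 0 < A → A < κ * m / 4 → m + A * r ^ 2 ≤ M := by
    intro A hA hAκ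
    set v : EuclideanSpace ℝ (Fin 2) → ℝ := fun y => u y - A * ‖y - y₀‖ ^ 2 with hv
    have hvcont : ContinuousOn v B :=
      (hsmooth.continuous.sub (continuous_const.mul
        ((continuous_id.sub continuous_const).norm.pow 2))).continuousOn
    obtain ⟨p, hpB, hp⟩ := hBc.exists_isMaxOn hBne hvcont
    have hpr : ‖p - y₀‖ ≤ r := by
      rw [← dist_eq_norm]
      exact Metric.mem_closedBall.mp hpB
    rcases eq_or_lt_of_le hpr with heq | hlt
    · have h1 : v y₀ ≤ v p := hp (Metric.mem_closedBall_self hr)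
      have h2 : v y₀ = u y₀ := by simp [hv]
      have h3 : v p = u p - A * r ^ 2 := by rw [hv]; simp only; rw [heq]
      have h4 : m ≤ u y₀ := hmemm y₀ (Metric.mem_closedBall_self hr)
      have h5 : u p ≤ M := hmemM p hpB
      rw [h2, h3] at h1
      linarith
    · exfalso
      have hloc : IsLocalMax v p := by
        have hball : Metric.ball p (r - ‖p - y₀‖) ⊆ B := by
          intro x hx
          rw [hB, Metric.mem_closedBall]
          have h1 : dist x p < r - ‖p - y₀‖ := Metric.mem_ball.mp hx
          calc dist x y₀ ≤ dist x p + dist p y₀ := dist_triangle x p y₀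
            _ = dist x p + ‖p - y₀‖ := by simp [dist_eq_norm]
            _ ≤ r := by linarith
        filter_upwards [Metric.ball_mem_nhds p (by linarith : (0:ℝ) < r - ‖p - y₀‖)] with x hx
        exact hp (hball hx)
      have h0 := aux_dir u A hsmooth p y₀ hloc (EuclideanSpace.single 0 1)
        (by rw [EuclideanSpace.norm_single]; norm_num)
      have h1 := aux_dir u A hsmooth p y₀ hloc (EuclideanSpace.single 1 1)
        (by rw [EuclideanSpace.norm_single]; norm_num)
      have h2 : κ * u p ≤ lap2 u p := hlap p
      have h3 : lap2 u p ≤ 4 * A := by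
        rw [lap2]; linarith
      have h4 : κ * m ≤ κ * u p := mul_le_mul_of_nonneg_left (hmemm p hpB) hκ.le
      linarith
  have hT : Filter.Tendsto (fun A : ℝ => m + A * r ^ 2)
      (nhdsWithin (κ * m / 4) (Set.Iio (κ * m / 4))) (nhds (m + (κ * m / 4) * r ^ 2)) := by
    refine Filter.Tendsto.mono_left ?_ nhdsWithin_le_nhds
    exact (continuous_const.add (continuous_id.mul continuous_const)).tendsto _
  have hEv : ∀ᶠ A in nhdsWithin (κ * m / 4) (Set.Iio (κ * m / 4)), m + A * r ^ 2 ≤ M := by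
    filter_upwards [Ioo_mem_nhdsLT_of_mem ⟨by positivity, le_rfl⟩] with A hA
    exact key A hA.1 hA.2
  have hfin : m + (κ * m / 4) * r ^ 2 ≤ M := le_of_tendsto hT hEv
  calc (1 + κ * r ^ 2 / 4) * m = m + (κ * m / 4) * r ^ 2 := by ring
    _ ≤ M := hfin
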